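/- Let G and G' be groups with identity elements e and e' respectively, Q a nonempty set, and f : G → G' an injective anti-homomorphism, i.e., f(xy) = f(y)f(x) for all x, y ∈ G. Let ν : G' × Q → [0,1] be an α-Q-fuzzy subgroup of G', and let μ = f⁻¹(ν) be its inverse image, μ(x, q) = ν(f(x), q). If the set X' = { y ∈ G' : ν(y, q) = ν(e', q) for all q ∈ Q } is abelian (any two of its elements commute), then the set X = { x ∈ G : μ(x, q) = μ(e, q) for all q ∈ Q } is abelian; that is, the inverse image of an α-Q-fuzzy abelian subgroup under an injective anti-homomorphism is an α-Q-fuzzy abelian subgroup. -/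

import Mathlib

/-- `μ` is an α-Q-fuzzy subgroup of the group `G`. -/
def IsAlphaQFuzzySubgroup {G Q : Type*} [Group G] (μ : G → Q → ℝ) : Prop :=
  (∀ x y q, μ (x * y) q ≥ min (μ x q) (μ y q)) ∧ (∀ x q, μ x⁻¹ q ≥ μ x q)

/-- The inverse image of an α-Q-fuzzy abelian subgroup under an injective
anti-homomorphism is α-Q-fuzzy abelian: if
`X' = {y ∈ G' | ν(y,q) = ν(e',q) ∀q}` is abelian, then so is
`X = {x ∈ G | μ(x,q) = μ(e,q) ∀q}` where `μ = f⁻¹(ν)`. -/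
theorem preimage_abelian {G G' Q : Type*} [Group G] [Group G'] [Nonempty Q]
    (f : G → G') (hinj : Function.Injective f)
    (hanti : ∀ x y : G, f (x * y) = f y * f x)
    (ν : G' → Q → ℝ)
    (h01 : ∀ x q, ν x q ∈ Set.Icc (0 : ℝ) 1)
    (hν : IsAlphaQFuzzySubgroup ν)
    (μ : G → Q → ℝ)
    (hμdef : ∀ (x : G) (q : Q), μ x q = ν (f x) q)
    (habel : ∀ a ∈ {y : G' | ∀ q : Q, ν y q = ν (1 : G') q},
      ∀ b ∈ {y : G' | ∀ q : Q, ν y q = ν (1 : G') q}, a * b = b * a) :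
    ∀ a ∈ {x : G | ∀ q : Q, μ x q = μ (1 : G) q},
      ∀ b ∈ {x : G | ∀ q : Q, μ x q = μ (1 : G) q}, a * b = b * a := by
  intro a ha b hb
  have hf1 : f 1 = 1 := by
    have := hanti 1 1
    rw [one_mul] at this
    exact right_eq_mul.mp this
  have ha' : ∀ q, ν (f a) q = ν (1 : G') q := fun q => by
    have := ha q; rwa [hμdef, hμdef, hf1] at this
  have hb' : ∀ q, ν (f b) q = ν (1 : G') q := fun q => by
    have := hb q; rwa [hμdef, hμdef, hf1] at this
  have hcomm := habel (f a) ha' (f b) hb'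
  apply hinj
  rw [hanti, hanti, hcomm]
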